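/- Let K = 2, n ≥ 1, λ_1 = 1 and λ_2 = λ with λ > 1. With the n type-1 jobs and n type-2 jobs having mutually independent exponential durations of means 1 and λ respectively, define C_FTPP = Σ_{a=1}^{2n} Σ_{b=1}^a P_b (with P_1, …, P_{2n} listing all jobs in nondecreasing order of their means) and C_OPT = Σ_j P_j + Σ_{1≤i<j≤2n} min(P_i, P_j). Then E[C_FTPP] ≤ (2 − 4(λ − 1)/((1 + λ)² + 4λ))·E[C_OPT]. -/

import Mathlib

open MeasureTheory ProbabilityTheory Finset

open MeasureTheory ProbabilityTheory Finset Real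

section Aux

lemma expMeasure_Iio_zero {r : ℝ} : expMeasure r (Set.Iio 0) = 0 := by
  rw [expMeasure, gammaMeasure, withDensity_apply _ measurableSet_Iio]
  exact lintegral_gammaPDF_of_nonpos le_rfl

lemma expMeasure_Ioi {r : ℝ} (hr : 0 < r) {t : ℝ} (ht : 0 ≤ t) :
    expMeasure r (Set.Ioi t) = ENNReal.ofReal (Real.exp (-(r*t))) := by
  have : IsProbabilityMeasure (expMeasure r) := isProbabilityMeasure_expMeasure hr
  have hIic : expMeasure r (Set.Iic t) = ENNReal.ofReal (1 - Real.exp (-(r*t))) := by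
    rw [← ofReal_cdf (expMeasure r) t]
    have : cdf (expMeasure r) t = if 0 ≤ t then 1 - Real.exp (-(r*t)) else 0 := cdf_expMeasure_eq hr t
    rw [this, if_pos ht]
  have hcompl : Set.Ioi t = (Set.Iic t)ᶜ := by simp
  rw [hcompl, prob_compl_eq_one_sub measurableSet_Iic, hIic]
  have h1 : Real.exp (-(r*t)) ≤ 1 := by
    rw [Real.exp_le_one_iff]; nlinarith
  have h0 : (0:ℝ) ≤ Real.exp (-(r*t)) := (Real.exp_pos _).le
  rw [ENNReal.ofReal_sub _ h0, ENNReal.ofReal_one]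
  rw [ENNReal.sub_sub_cancel ENNReal.one_ne_top]
  exact ENNReal.ofReal_le_one.mpr h1

lemma integral_exp_rate {r : ℝ} (hr : 0 < r) :
    ∫ t in Set.Ioi (0:ℝ), Real.exp (-(r*t)) = 1/r := by
  have := integral_comp_mul_left_Ioi (fun x => Real.exp (-x)) 0 hr
  simp only [mul_zero] at this
  rw [show (fun t => Real.exp (-(r*t))) = (fun t => Real.exp (-(r*t))) from rfl]
  calc ∫ t in Set.Ioi (0:ℝ), Real.exp (-(r*t))
      = r⁻¹ • ∫ x in Set.Ioi (0:ℝ), Real.exp (-x) := this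
    _ = 1/r := by rw [integral_exp_neg_Ioi_zero]; simp [one_div]

/-- Master lemma: a nonneg rv with exponential tail has mean `1/r` and is integrable. -/
lemma exp_tail_integral {Ω : Type*} [MeasurableSpace Ω] (μ : Measure Ω) [IsProbabilityMeasure μ]
    {Z : Ω → ℝ} (hZ : Measurable Z) {r : ℝ} (hr : 0 < r)
    (hnn : 0 ≤ᵐ[μ] Z)
    (htail : ∀ t : ℝ, 0 < t → μ {ω | t < Z ω} = ENNReal.ofReal (Real.exp (-(r*t)))) :
    Integrable Z μ ∧ ∫ ω, Z ω ∂μ = 1/r := by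
  have key : ∫⁻ ω, ENNReal.ofReal (Z ω) ∂μ = ENNReal.ofReal (1/r) := by
    rw [lintegral_eq_lintegral_meas_lt μ hnn hZ.aemeasurable]
    rw [setLIntegral_congr_fun_ae measurableSet_Ioi
      (ae_of_all _ (fun t (ht : t ∈ Set.Ioi 0) => htail t ht))]
    rw [← ofReal_integral_eq_lintegral_ofReal]
    · rw [integral_exp_rate hr]
    · simpa only [neg_mul] using (exp_neg_integrableOn_Ioi 0 hr).integrable
    · exact ae_of_all _ fun t => (Real.exp_pos _).le
  have hint : Integrable Z μ := by
    refine ⟨hZ.aestronglyMeasurable, ?_⟩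
    rw [hasFiniteIntegral_iff_ofReal hnn, key]
    exact ENNReal.ofReal_lt_top
  refine ⟨hint, ?_⟩
  rw [integral_eq_lintegral_of_nonneg_ae hnn hZ.aestronglyMeasurable, key,
    ENNReal.toReal_ofReal (by positivity)]

end Aux
lemma tail_of_map {Ω : Type*} [MeasurableSpace Ω] {μ : Measure Ω} [IsProbabilityMeasure μ]
    {Z : Ω → ℝ} (hZ : Measurable Z) {r : ℝ} (hr : 0 < r)
    (hmap : Measure.map Z μ = expMeasure r) :
    (∀ t : ℝ, 0 ≤ t → μ {ω | t < Z ω} = ENNReal.ofReal (Real.exp (-(r*t)))) ∧ 0 ≤ᵐ[μ] Z := by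
  constructor
  · intro t ht
    have h1 : {ω | t < Z ω} = Z ⁻¹' Set.Ioi t := rfl
    rw [h1, ← Measure.map_apply hZ measurableSet_Ioi, hmap, expMeasure_Ioi hr ht]
  · have key : ∀ᵐ ω ∂μ, 0 ≤ Z ω := by
      rw [ae_iff]
      have h2 : {ω | ¬ 0 ≤ Z ω} = Z ⁻¹' Set.Iio 0 := by ext; simp [not_le]
      rw [h2, ← Measure.map_apply hZ measurableSet_Iio, hmap, expMeasure_Iio_zero]
    filter_upwards [key] with ω h using h

lemma exp_moment {Ω : Type*} [MeasurableSpace Ω] (μ : Measure Ω) [IsProbabilityMeasure μ]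
    {Z : Ω → ℝ} (hZ : Measurable Z) {r : ℝ} (hr : 0 < r)
    (hmap : Measure.map Z μ = expMeasure r) :
    Integrable Z μ ∧ ∫ ω, Z ω ∂μ = 1/r := by
  obtain ⟨ht, hnn⟩ := tail_of_map hZ hr hmap
  exact exp_tail_integral μ hZ hr hnn (fun t ht' => ht t ht'.le)

lemma exp_min_moment {Ω : Type*} [MeasurableSpace Ω] (μ : Measure Ω) [IsProbabilityMeasure μ]
    {X Y : Ω → ℝ} (hX : Measurable X) (hY : Measurable Y) {a b : ℝ} (ha : 0 < a) (hb : 0 < b)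
    (hmX : Measure.map X μ = expMeasure a) (hmY : Measure.map Y μ = expMeasure b)
    (hXY : IndepFun X Y μ) :
    Integrable (fun ω => min (X ω) (Y ω)) μ ∧
      ∫ ω, min (X ω) (Y ω) ∂μ = 1/(a+b) := by
  obtain ⟨htX, hnX⟩ := tail_of_map hX ha hmX
  obtain ⟨htY, hnY⟩ := tail_of_map hY hb hmY
  refine exp_tail_integral μ (hX.min hY) (by positivity) ?_ ?_
  · filter_upwards [hnX, hnY] with ω h1 h2
    exact le_min h1 h2
  · intro t ht
    have h1 : {ω | t < min (X ω) (Y ω)} = X ⁻¹' Set.Ioi t ∩ Y ⁻¹' Set.Ioi t := by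
      ext ω; simp [lt_min_iff]
    rw [h1, hXY.measure_inter_preimage_eq_mul _ _ measurableSet_Ioi measurableSet_Ioi]
    rw [show X ⁻¹' Set.Ioi t = {ω | t < X ω} from rfl, htX t ht.le]
    rw [show Y ⁻¹' Set.Ioi t = {ω | t < Y ω} from rfl, htY t ht.le]
    rw [← ENNReal.ofReal_mul (Real.exp_pos _).le, ← Real.exp_add]
    congr 2
    ring


lemma sum_range_cast (m : ℕ) : ∑ i ∈ Finset.range m, (i:ℝ) = m*(m-1)/2 := by
  induction m with
  | zero => simp
  | succ k ih => rw [Finset.sum_range_succ, ih]; push_cast; ring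

/-- split a `range (n*2)` sum of a threshold function -/
lemma sum_thresh (n : ℕ) (f g : ℕ → ℝ) :
    ∑ i ∈ Finset.range (n*2), (if i < n then f i else g i)
      = (∑ i ∈ Finset.range n, f i) + ∑ i ∈ Finset.Ico n (n*2), g i := by
  rw [← Finset.sum_range_add_sum_Ico _ (by omega : n ≤ n*2)]
  congr 1
  · exact Finset.sum_congr rfl fun i hi => if_pos (Finset.mem_range.mp hi)
  · exact Finset.sum_congr rfl fun i hi => if_neg (by have := (Finset.mem_Ico.mp hi).1; omega)

lemma T1val (n : ℕ) (x y : ℝ) :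
    ∑ b : Fin (n*2), (if (b:ℕ) < n then x else y) = n*x + n*y := by
  rw [Fin.sum_univ_eq_sum_range (fun i => if i < n then x else y) (n*2), sum_thresh]
  rw [Finset.sum_const, Finset.sum_const, Nat.card_Ico]
  simp only [Finset.card_range, nsmul_eq_mul]
  have : n*2 - n = n := by omega
  rw [this]

lemma T2val (n : ℕ) (x y : ℝ) :
    ∑ a : Fin (n*2), ∑ b ∈ Finset.Iic a, (if (b:ℕ) < n then x else y)
      = ((3*n^2+n)/2)*x + (n*(n+1)/2)*y := by
  have swap : ∑ a : Fin (n*2), ∑ b ∈ Finset.Iic a, (if (b:ℕ) < n then x else y)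
      = ∑ b : Fin (n*2), ∑ _a ∈ Finset.Ici b, (if (b:ℕ) < n then x else y) :=
    Finset.sum_comm' (by intro a b; simp [Finset.mem_Iic, Finset.mem_Ici, and_comm])
  rw [swap]
  have step : ∀ b : Fin (n*2), ∑ _a ∈ Finset.Ici b, (if (b:ℕ) < n then x else y)
      = if (b:ℕ) < n then ((n*2:ℕ) - (b:ℕ) : ℕ) * x else ((n*2:ℕ) - (b:ℕ) : ℕ) * y := by
    intro b
    rw [Finset.sum_const, Fin.card_Ici]
    split_ifs <;> rw [nsmul_eq_mul]
  rw [Finset.sum_congr rfl fun b _ => step b]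
  rw [Fin.sum_univ_eq_sum_range (fun i => if i < n then ((n*2 - i : ℕ):ℝ) * x else ((n*2 - i : ℕ):ℝ) * y) (n*2)]
  rw [sum_thresh]
  have c1 : ∀ i ∈ Finset.range n, ((n*2 - i : ℕ):ℝ) * x = ((n:ℝ)*2 - i) * x := by
    intro i hi
    have : i ≤ n*2 := by have := Finset.mem_range.mp hi; omega
    rw [Nat.cast_sub this]; push_cast; ring
  have c2 : ∀ i ∈ Finset.Ico n (n*2), ((n*2 - i : ℕ):ℝ) * y = ((n:ℝ)*2 - i) * y := by
    intro i hi
    have : i ≤ n*2 := le_of_lt (Finset.mem_Ico.mp hi).2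
    rw [Nat.cast_sub this]; push_cast; ring
  rw [Finset.sum_congr rfl c1, Finset.sum_congr rfl c2]
  have e1 : ∑ i ∈ Finset.range n, ((n:ℝ)*2 - i) * x
      = ((n:ℝ)*(n*2) - n*(n-1)/2) * x := by
    rw [← Finset.sum_mul]; congr 1
    rw [Finset.sum_sub_distrib, Finset.sum_const, Finset.card_range, sum_range_cast]
    push_cast; ring
  have e2 : ∑ i ∈ Finset.Ico n (n*2), ((n:ℝ)*2 - i) * y
      = (((n:ℝ)*(n*2)) - ((n*2:ℕ)*((n*2:ℕ)-1)/2 - (n:ℝ)*(n-1)/2)) * y := by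
    rw [← Finset.sum_mul]; congr 1
    rw [Finset.sum_sub_distrib, Finset.sum_const, Nat.card_Ico]
    rw [Finset.sum_Ico_eq_sub _ (by omega : n ≤ n*2), sum_range_cast, sum_range_cast]
    have : n*2 - n = n := by omega
    rw [this]; ring
  rw [e1, e2]; push_cast; ring

lemma two_mul_sum_Ioi {N : ℕ} (F : Fin N → Fin N → ℝ) (hsymm : ∀ i j, F i j = F j i) :
    2 * (∑ i, ∑ j ∈ Finset.Ioi i, F i j) = (∑ i, ∑ j, F i j) - ∑ i, F i i := by
  have split : ∀ i : Fin N, ∑ j, F i j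
      = (∑ j ∈ Finset.Iio i, F i j) + (F i i + ∑ j ∈ Finset.Ioi i, F i j) := by
    intro i
    have hu : (Finset.univ : Finset (Fin N)) = Finset.Iio i ∪ Finset.Ici i := by
      ext j; simp [Finset.mem_Iio, Finset.mem_Ici, lt_or_ge]
    rw [show ∑ j, F i j = ∑ j ∈ Finset.univ, F i j from rfl, hu,
      Finset.sum_union (by simp [Finset.disjoint_left, Finset.mem_Iio, Finset.mem_Ici, not_le]),
      ← Finset.Ioi_insert, Finset.sum_insert Finset.notMem_Ioi_self]
  have h1 : ∑ i : Fin N, ∑ j, F i j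
      = (∑ i : Fin N, ∑ j ∈ Finset.Iio i, F i j) + ((∑ i, F i i) + ∑ i : Fin N, ∑ j ∈ Finset.Ioi i, F i j) := by
    rw [← Finset.sum_add_distrib, ← Finset.sum_add_distrib]
    exact Finset.sum_congr rfl fun i _ => split i
  have h2 : ∑ i : Fin N, ∑ j ∈ Finset.Iio i, F i j = ∑ i : Fin N, ∑ j ∈ Finset.Ioi i, F i j := by
    have hs := Finset.sum_comm' (s := (Finset.univ : Finset (Fin N))) (t := fun i => Finset.Iio i)
        (s' := fun j => Finset.Ioi j) (t' := (Finset.univ : Finset (Fin N)))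
        (by intro a b; simp [and_comm]) (f := F)
    rw [hs]
    exact Finset.sum_congr rfl fun i _ => Finset.sum_congr rfl fun j _ => hsymm j i
  rw [h2] at h1
  linarith

lemma double_sum_thresh (n : ℕ) (c00 c01 c10 c11 : ℝ) :
    ∑ i : Fin (n*2), ∑ j : Fin (n*2),
      (if (i:ℕ) < n then (if (j:ℕ) < n then c00 else c01)
        else (if (j:ℕ) < n then c10 else c11))
      = n*(n*c00 + n*c01) + n*(n*c10 + n*c11) := by
  have inner : ∀ i : Fin (n*2), ∑ j : Fin (n*2),
      (if (i:ℕ) < n then (if (j:ℕ) < n then c00 else c01)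
        else (if (j:ℕ) < n then c10 else c11))
      = if (i:ℕ) < n then ((n:ℝ)*c00 + n*c01) else ((n:ℝ)*c10 + n*c11) := by
    intro i
    by_cases h : (i:ℕ) < n
    · simp only [if_pos h]; exact T1val n c00 c01
    · simp only [if_neg h]; exact T1val n c10 c11
  rw [Finset.sum_congr rfl fun i _ => inner i, T1val]

lemma key_thresh {n : ℕ} (e : Fin (n*2) ≃ Fin 2 × Fin n)
    (he : ∀ a b : Fin (n*2), a ≤ b → (e a).1 ≤ (e b).1) (b : Fin (n*2)) :
    (e b).1 = 0 ↔ (b:ℕ) < n := by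
  classical
  have hcard : (Finset.univ.filter (fun b : Fin (n*2) => (e b).1 = 0)).card = n := by
    have h1 : (Finset.univ.filter (fun b : Fin (n*2) => (e b).1 = 0)).card
        = (Finset.univ.filter (fun p : Fin 2 × Fin n => p.1 = 0)).card := by
      apply Finset.card_bij' (fun b _ => e b) (fun p _ => e.symm p)
      · intro a ha
        simp only [Finset.mem_filter, Finset.mem_univ, true_and] at ha ⊢
        exact ha
      · intro p hp
        simp only [Finset.mem_filter, Finset.mem_univ, true_and, Equiv.apply_symm_apply] at hp ⊢
        exact hp
      · intro a _; exact e.symm_apply_apply a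
      · intro p _; exact e.apply_symm_apply p
    have h2 : Finset.univ.filter (fun p : Fin 2 × Fin n => p.1 = 0)
        = ({(0 : Fin 2)} : Finset (Fin 2)) ×ˢ (Finset.univ : Finset (Fin n)) := by
      ext ⟨k, i⟩
      simp [Finset.mem_product, eq_comm]
    rw [h1, h2, Finset.card_product, Finset.card_singleton, Finset.card_univ, Fintype.card_fin,
      one_mul]
  constructor
  · intro h0
    by_contra hnot
    have sub : Finset.Iic b ⊆ Finset.univ.filter (fun b : Fin (n*2) => (e b).1 = 0) := by
      intro b' hb'
      rw [Finset.mem_filter]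
      refine ⟨Finset.mem_univ _, ?_⟩
      have hle := he b' b (Finset.mem_Iic.mp hb')
      rw [h0] at hle
      exact Fin.le_zero_iff.mp hle
    have hc := Finset.card_le_card sub
    rw [Fin.card_Iic, hcard] at hc
    omega
  · intro hlt
    by_contra h0
    have h1 : (e b).1 = 1 := by
      have hv : ((e b).1).val ≠ 0 := fun h => h0 (Fin.ext h)
      have := ((e b).1).isLt
      exact Fin.ext (by omega)
    have sub : Finset.univ.filter (fun b : Fin (n*2) => (e b).1 = 0) ⊆ Finset.Iio b := by
      intro b' hb'
      rw [Finset.mem_filter] at hb'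
      rw [Finset.mem_Iio]
      by_contra hge
      have hle := he b b' (le_of_not_gt hge)
      rw [h1, hb'.2] at hle
      exact absurd hle (by decide)
    have hc := Finset.card_le_card sub
    rw [Fin.card_Iio, hcard] at hc
    omega

lemma final_ineq (N lambda : ℝ) (hN : 1 ≤ N) (hl : 1 < lambda) :
    ((3*N^2+N)/2)*1 + (N*(N+1)/2)*lambda ≤
      (2 - 4*(lambda-1)/((1+lambda)^2+4*lambda)) *
        ((N*1 + N*lambda) +
          (N*(N*(1/((1:ℝ)+1)) + N*(1/(1+1/lambda))) + N*(N*(1/(1/lambda+1)) + N*(1/(1/lambda+1/lambda)))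
            - (N*(1/((1:ℝ)+1)) + N*(1/(1/lambda+1/lambda))))/2) := by
  have hl0 : 0 < lambda := by linarith
  have hD : 0 < (1+lambda)^2 + 4*lambda := by nlinarith
  have h1l : 0 < 1 + lambda := by linarith
  have key : (2 - 4*(lambda-1)/((1+lambda)^2+4*lambda)) *
        ((N*1 + N*lambda) +
          (N*(N*(1/((1:ℝ)+1)) + N*(1/(1+1/lambda))) + N*(N*(1/(1/lambda+1)) + N*(1/(1/lambda+1/lambda)))
            - (N*(1/((1:ℝ)+1)) + N*(1/(1/lambda+1/lambda))))/2)
      - (((3*N^2+N)/2)*1 + (N*(N+1)/2)*lambda)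
      = N*(lambda^4+5*lambda^3+11*lambda^2+11*lambda+4) / (((1+lambda)^2+4*lambda)*(1+lambda)) := by
    field_simp
    ring
  have hQ : 0 ≤ N*(lambda^4+5*lambda^3+11*lambda^2+11*lambda+4) / (((1+lambda)^2+4*lambda)*(1+lambda)) := by
    apply div_nonneg
    · have hpoly : 0 < lambda^4+5*lambda^3+11*lambda^2+11*lambda+4 := by
        nlinarith [pow_pos hl0 4, pow_pos hl0 3, pow_pos hl0 2, hl0]
      exact mul_nonneg (by linarith) hpoly.le
    · positivity
  linarith [key, hQ]

/-- Competitive ratio bound for FTPP with two job types of means `1` and `λ > 1`: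
`E[C_FTPP] ≤ (2 - 4(λ-1)/((1+λ)² + 4λ)) * E[C_OPT]`. -/
theorem stmt_4
    {Ω : Type*} [MeasurableSpace Ω] (μ : Measure Ω) [IsProbabilityMeasure μ]
    (n : ℕ) (hn : 1 ≤ n)
    (lambda : ℝ) (hlambda : 1 < lambda)
    (P : Fin 2 → Fin n → Ω → ℝ)
    (hmeas : ∀ k i, Measurable (P k i))
    (hdist1 : ∀ i, Measure.map (P 0 i) μ = expMeasure 1)
    (hdist2 : ∀ i, Measure.map (P 1 i) μ = expMeasure (1 / lambda))
    (hindep : iIndepFun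
      (fun p : Fin 2 × Fin n => P p.1 p.2) μ)
    (e : Fin (n * 2) ≃ Fin 2 × Fin n)
    -- the enumeration lists the jobs in nondecreasing order of their means,
    -- i.e. all type-1 jobs (mean 1) before all type-2 jobs (mean λ)
    (he : ∀ a b : Fin (n * 2), a ≤ b → (e a).1 ≤ (e b).1)
    (CFTPP COPT : Ω → ℝ)
    (hCFTPP : ∀ ω, CFTPP ω =
      ∑ a : Fin (n * 2), ∑ b ∈ Finset.Iic a, P (e b).1 (e b).2 ω)
    (hCOPT : ∀ ω, COPT ω =
      (∑ j : Fin (n * 2), P (e j).1 (e j).2 ω) +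
      ∑ i : Fin (n * 2), ∑ j ∈ Finset.Ioi i,
        min (P (e i).1 (e i).2 ω) (P (e j).1 (e j).2 ω)) :
    ∫ ω, CFTPP ω ∂μ ≤
      (2 - 4 * (lambda - 1) / ((1 + lambda) ^ 2 + 4 * lambda)) * ∫ ω, COPT ω ∂μ := by
  classical
  have hl0 : (0:ℝ) < lambda := by linarith
  set rate : Fin 2 → ℝ := fun k => if k = 0 then 1 else 1/lambda with hrate
  have ratepos : ∀ k : Fin 2, 0 < rate k := by
    intro k
    simp only [hrate]
    split_ifs
    · norm_num
    · positivity
  have hmap : ∀ p : Fin 2 × Fin n, Measure.map (P p.1 p.2) μ = expMeasure (rate p.1) := by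
    rintro ⟨k, i⟩
    fin_cases k
    · simpa [hrate] using hdist1 i
    · simpa [hrate] using hdist2 i
  have hIE : ∀ p : Fin 2 × Fin n, Integrable (P p.1 p.2) μ :=
    fun p => (exp_moment μ (hmeas p.1 p.2) (ratepos p.1) (hmap p)).1
  have hkey : ∀ b : Fin (n*2), ((e b).1 = 0) ↔ ((b:ℕ) < n) := key_thresh e he
  have hMean : ∀ b : Fin (n*2),
      ∫ ω, P (e b).1 (e b).2 ω ∂μ = if (b:ℕ) < n then (1:ℝ) else lambda := by
    intro b
    rw [(exp_moment μ (hmeas _ _) (ratepos _) (hmap (e b))).2]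
    by_cases h : (b:ℕ) < n
    · have h0 : (e b).1 = 0 := (hkey b).mpr h
      rw [if_pos h, h0]
      simp [hrate]
    · have h0 : ¬ (e b).1 = 0 := fun hc => h ((hkey b).mp hc)
      rw [if_neg h]
      simp only [hrate, if_neg h0]
      exact one_div_one_div lambda
  have hne : ∀ i j : Fin (n*2), i ≠ j → e i ≠ e j :=
    fun i j hij h => hij (e.injective h)
  have hMinPair : ∀ i j : Fin (n*2), i ≠ j →
      Integrable (fun ω => min (P (e i).1 (e i).2 ω) (P (e j).1 (e j).2 ω)) μ ∧
      ∫ ω, min (P (e i).1 (e i).2 ω) (P (e j).1 (e j).2 ω) ∂μ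
        = 1/(rate (e i).1 + rate (e j).1) :=
    fun i j hij => exp_min_moment μ (hmeas _ _) (hmeas _ _) (ratepos _) (ratepos _)
      (hmap (e i)) (hmap (e j)) (hindep.indepFun (hne i j hij))
  set W : Fin (n*2) → Fin (n*2) → ℝ := fun i j =>
    if (i:ℕ) < n then (if (j:ℕ) < n then 1/((1:ℝ)+1) else 1/(1+1/lambda))
    else (if (j:ℕ) < n then 1/(1/lambda+1) else 1/(1/lambda+1/lambda)) with hW
  have hMin : ∀ i j : Fin (n*2), i ≠ j →
      ∫ ω, min (P (e i).1 (e i).2 ω) (P (e j).1 (e j).2 ω) ∂μ = W i j := by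
    intro i j hij
    rw [(hMinPair i j hij).2]
    have hi' : ((e i).1 = 0) = ((i:ℕ) < n) := propext (hkey i)
    have hj' : ((e j).1 = 0) = ((j:ℕ) < n) := propext (hkey j)
    simp only [hW, hrate, hi', hj']
    split_ifs <;> norm_num
  have hFT : ∫ ω, CFTPP ω ∂μ = ((3*(n:ℝ)^2+(n:ℝ))/2)*1 + ((n:ℝ)*((n:ℝ)+1)/2)*lambda := by
    rw [integral_congr_ae (ae_of_all μ hCFTPP)]
    rw [integral_finset_sum _ (fun a _ => integrable_finset_sum _ (fun b _ => hIE (e b)))]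
    rw [Finset.sum_congr rfl fun a _ => integral_finset_sum _ (fun b _ => hIE (e b))]
    rw [Finset.sum_congr rfl fun a _ => Finset.sum_congr rfl fun b _ => hMean b]
    exact T2val n 1 lambda
  have hsymmW : ∀ i j, W i j = W j i := by
    intro i j; simp only [hW]; split_ifs <;> ring
  have hdouble := two_mul_sum_Ioi W hsymmW
  have hXX : ∑ i : Fin (n*2), ∑ j : Fin (n*2), W i j
      = (n:ℝ)*((n:ℝ)*(1/((1:ℝ)+1)) + (n:ℝ)*(1/(1+1/lambda)))
        + (n:ℝ)*((n:ℝ)*(1/(1/lambda+1)) + (n:ℝ)*(1/(1/lambda+1/lambda))) :=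
    double_sum_thresh n _ _ _ _
  have hdiagW : ∀ i : Fin (n*2), W i i
      = if (i:ℕ) < n then 1/((1:ℝ)+1) else 1/(1/lambda+1/lambda) := by
    intro i; simp only [hW]; split_ifs with h <;> rfl
  have hdiag : ∑ i : Fin (n*2), W i i
      = (n:ℝ)*(1/((1:ℝ)+1)) + (n:ℝ)*(1/(1/lambda+1/lambda)) := by
    rw [Finset.sum_congr rfl fun i _ => hdiagW i]; exact T1val n _ _
  have hSS : ∑ i : Fin (n*2), ∑ j ∈ Finset.Ioi i, W i j
      = ((n:ℝ)*((n:ℝ)*(1/((1:ℝ)+1)) + (n:ℝ)*(1/(1+1/lambda)))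
          + (n:ℝ)*((n:ℝ)*(1/(1/lambda+1)) + (n:ℝ)*(1/(1/lambda+1/lambda)))
        - ((n:ℝ)*(1/((1:ℝ)+1)) + (n:ℝ)*(1/(1/lambda+1/lambda))))/2 := by
    rw [hXX, hdiag] at hdouble
    linarith
  have hOPT : ∫ ω, COPT ω ∂μ = ((n:ℝ)*1 + (n:ℝ)*lambda) +
      ((n:ℝ)*((n:ℝ)*(1/((1:ℝ)+1)) + (n:ℝ)*(1/(1+1/lambda)))
          + (n:ℝ)*((n:ℝ)*(1/(1/lambda+1)) + (n:ℝ)*(1/(1/lambda+1/lambda)))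
        - ((n:ℝ)*(1/((1:ℝ)+1)) + (n:ℝ)*(1/(1/lambda+1/lambda))))/2 := by
    rw [integral_congr_ae (ae_of_all μ hCOPT)]
    rw [integral_add (integrable_finset_sum _ (fun j _ => hIE (e j)))
      (integrable_finset_sum _ (fun i _ => integrable_finset_sum _
        (fun j hj => (hMinPair i j (ne_of_lt (Finset.mem_Ioi.mp hj))).1)))]
    congr 1
    · rw [integral_finset_sum _ (fun j _ => hIE (e j)),
        Finset.sum_congr rfl fun b _ => hMean b]
      exact T1val n 1 lambda
    · rw [integral_finset_sum _ (fun i _ => integrable_finset_sum _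
        (fun j hj => (hMinPair i j (ne_of_lt (Finset.mem_Ioi.mp hj))).1))]
      rw [Finset.sum_congr rfl fun i _ => integral_finset_sum _
        (fun j hj => (hMinPair i j (ne_of_lt (Finset.mem_Ioi.mp hj))).1)]
      rw [Finset.sum_congr rfl fun i _ => Finset.sum_congr rfl fun j hj =>
        hMin i j (ne_of_lt (Finset.mem_Ioi.mp hj))]
      exact hSS
  rw [hFT, hOPT]
  exact final_ineq (n:ℝ) lambda (by exact_mod_cast hn) hlambda
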